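/- Let 𝒴 be a finite nonempty set, w : 𝒴 → [0,1] with Σ_{y∈𝒴} w(y) = 1, and a : 𝒴 → (0,1]. Define Ẽ₀(ρ) = −log( Σ_{y∈𝒴} w(y)·a(y)^ρ ) for ρ > 0. Then the map ρ ↦ Ẽ₀(ρ)/ρ is nonincreasing on (0,∞), and sup_{ρ>0} Ẽ₀(ρ)/ρ = lim_{ρ→0+} Ẽ₀(ρ)/ρ = Σ_{y∈𝒴} w(y)·log(1/a(y)). -/

import Mathlib

open Finset

/-- Let `w : 𝒴 → [0,1]` sum to `1` and `a : 𝒴 → (0,1]`, and set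
`Ẽ₀(ρ) = −log(Σ_y w(y)·a(y)^ρ)`. Then `ρ ↦ Ẽ₀(ρ)/ρ` is nonincreasing on `(0,∞)`, and
`sup_{ρ>0} Ẽ₀(ρ)/ρ = lim_{ρ→0⁺} Ẽ₀(ρ)/ρ = Σ_y w(y)·log(1/a(y))`. -/
theorem Etilde0_div_rho_antitone_sup_lim
    {Y : Type*} [Fintype Y] [Nonempty Y]
    (w : Y → ℝ) (hw0 : ∀ y, 0 ≤ w y) (hw1 : ∀ y, w y ≤ 1) (hwsum : ∑ y, w y = 1)
    (a : Y → ℝ) (ha0 : ∀ y, 0 < a y) (ha1 : ∀ y, a y ≤ 1) :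
    (∀ ρ₁ ρ₂ : ℝ, 0 < ρ₁ → ρ₁ ≤ ρ₂ →
        (-Real.log (∑ y, w y * a y ^ ρ₂)) / ρ₂ ≤ (-Real.log (∑ y, w y * a y ^ ρ₁)) / ρ₁) ∧
    Filter.Tendsto (fun ρ : ℝ => (-Real.log (∑ y, w y * a y ^ ρ)) / ρ)
      (nhdsWithin 0 (Set.Ioi 0)) (nhds (∑ y, w y * Real.log (1 / a y))) ∧
    (⨆ ρ : {ρ : ℝ // 0 < ρ}, (-Real.log (∑ y, w y * a y ^ ρ.1)) / ρ.1)
      = ∑ y, w y * Real.log (1 / a y) := by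
  have hSpos : ∀ ρ : ℝ, 0 < ∑ y, w y * a y ^ ρ := by
    intro ρ
    obtain ⟨y0, hy0⟩ : ∃ y, 0 < w y := by
      by_contra h
      push_neg at h
      have : ∑ y, w y = 0 :=
        Finset.sum_eq_zero fun y _ => le_antisymm (h y) (hw0 y)
      rw [this] at hwsum; norm_num at hwsum
    exact Finset.sum_pos'
      (fun y _ => mul_nonneg (hw0 y) (Real.rpow_nonneg (ha0 y).le _))
      ⟨y0, Finset.mem_univ _, mul_pos hy0 (Real.rpow_pos_of_pos (ha0 y0) _)⟩
  have hmono : ∀ ρ₁ ρ₂ : ℝ, 0 < ρ₁ → ρ₁ ≤ ρ₂ →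
      (-Real.log (∑ y, w y * a y ^ ρ₂)) / ρ₂ ≤ (-Real.log (∑ y, w y * a y ^ ρ₁)) / ρ₁ := by
    intro ρ₁ ρ₂ h1 h12
    have h2 : 0 < ρ₂ := lt_of_lt_of_le h1 h12
    have hp : 1 ≤ ρ₂ / ρ₁ := (one_le_div h1).2 h12
    have key : (∑ y, w y * a y ^ ρ₁) ^ (ρ₂ / ρ₁) ≤ ∑ y, w y * a y ^ ρ₂ := by
      have h := Real.rpow_arith_mean_le_arith_mean_rpow Finset.univ w (fun y => a y ^ ρ₁)
        (fun y _ => hw0 y) hwsum (fun y _ => (Real.rpow_pos_of_pos (ha0 y) _).le) hp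
      have hrw : ∀ y : Y, (a y ^ ρ₁ : ℝ) ^ (ρ₂ / ρ₁) = a y ^ ρ₂ := by
        intro y
        rw [← Real.rpow_mul (ha0 y).le, mul_comm, div_mul_cancel₀ _ h1.ne']
      calc (∑ y, w y * a y ^ ρ₁) ^ (ρ₂ / ρ₁) ≤ ∑ y, w y * (a y ^ ρ₁) ^ (ρ₂ / ρ₁) := h
        _ = ∑ y, w y * a y ^ ρ₂ := by simp_rw [hrw]
    have hlog : (ρ₂ / ρ₁) * Real.log (∑ y, w y * a y ^ ρ₁)
        ≤ Real.log (∑ y, w y * a y ^ ρ₂) := by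
      have := Real.log_le_log (Real.rpow_pos_of_pos (hSpos ρ₁) _) key
      rwa [Real.log_rpow (hSpos ρ₁)] at this
    rw [div_le_div_iff₀ h2 h1]
    rw [div_mul_eq_mul_div, div_le_iff₀ h1] at hlog
    linarith
  have hS0 : (∑ y, w y * a y ^ (0 : ℝ)) = 1 := by
    simp only [Real.rpow_zero, mul_one]; exact hwsum
  have hderS : HasDerivAt (fun ρ : ℝ => ∑ y, w y * a y ^ ρ)
      (∑ y, w y * Real.log (a y)) 0 := by
    have h : ∀ y ∈ Finset.univ, HasDerivAt (fun ρ : ℝ => w y * a y ^ ρ)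
        (w y * Real.log (a y)) 0 := by
      intro y _
      have h := ((Real.hasStrictDerivAt_const_rpow (ha0 y) 0).hasDerivAt).const_mul (w y)
      simpa [Real.rpow_zero] using h
    simpa using HasDerivAt.fun_sum h
  have hderf : HasDerivAt (fun ρ : ℝ => -Real.log (∑ y, w y * a y ^ ρ))
      (∑ y, w y * Real.log (1 / a y)) 0 := by
    have h := (hderS.log (by rw [hS0]; norm_num)).fun_neg
    rw [hS0] at h
    convert h using 1
    · rfl
    · rfl
    simp only [one_div, Real.log_inv, mul_neg, Finset.sum_neg_distrib, div_one]
  have hlim : Filter.Tendsto (fun ρ : ℝ => (-Real.log (∑ y, w y * a y ^ ρ)) / ρ)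
      (nhdsWithin 0 (Set.Ioi 0)) (nhds (∑ y, w y * Real.log (1 / a y))) := by
    have h := hasDerivAt_iff_tendsto_slope.mp hderf
    have heq : (fun ρ : ℝ => (-Real.log (∑ y, w y * a y ^ ρ)) / ρ)
        = slope (fun ρ : ℝ => -Real.log (∑ y, w y * a y ^ ρ)) 0 := by
      funext ρ
      simp [slope_def_field, hS0, hwsum]
    rw [heq]
    exact h.mono_left (nhdsWithin_mono _ (fun x hx => ne_of_gt hx))
  have hub : ∀ ρ : ℝ, 0 < ρ →
      (-Real.log (∑ y, w y * a y ^ ρ)) / ρ ≤ ∑ y, w y * Real.log (1 / a y) := by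
    intro ρ hρ
    refine ge_of_tendsto hlim ?_
    filter_upwards [Ioc_mem_nhdsGT_of_mem ⟨le_refl (0 : ℝ), hρ⟩] with x hx
    exact hmono x ρ hx.1 hx.2
  haveI : Nonempty {ρ : ℝ // 0 < ρ} := ⟨⟨1, one_pos⟩⟩
  refine ⟨hmono, hlim, le_antisymm (ciSup_le fun ρ => hub ρ.1 ρ.2) ?_⟩
  refine le_of_tendsto hlim ?_
  filter_upwards [self_mem_nhdsWithin] with ρ (hρ : ρ ∈ Set.Ioi (0 : ℝ))
  exact le_ciSup ⟨∑ y, w y * Real.log (1 / a y), by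
    rintro x ⟨ρ', rfl⟩; exact hub ρ'.1 ρ'.2⟩ (⟨ρ, hρ⟩ : {ρ : ℝ // 0 < ρ})
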